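/- Let S be an operator on X with iℝ ⊆ ρ(S). Then G₊ ∩ G₋ = {0}. -/

import Mathlib

open Complex MeasureTheory Set Filter

noncomputable section

variable {E : Type*} [NormedAddCommGroup E] [NormedSpace ℂ E]

/-- `R : E →L[ℂ] E` is the (everywhere defined, bounded) inverse of `S - lam`. -/
def IsResolventAt (S : E →ₗ.[ℂ] E) (lam : ℂ) (R : E →L[ℂ] E) : Prop :=
  (∀ x, R x ∈ S.domain) ∧
  (∀ x : S.domain, R (S x - lam • (x : E)) = (x : E)) ∧
  (∀ (x : E) (hx : R x ∈ S.domain), S ⟨R x, hx⟩ - lam • R x = x)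

/-- The resolvent set of the (possibly unbounded, not densely defined) operator `S`. -/
def resolvSet (S : E →ₗ.[ℂ] E) : Set ℂ := {lam | ∃ R, IsResolventAt S lam R}

/-- The spectrum of `S`. -/
def pSpectrum (S : E →ₗ.[ℂ] E) : Set ℂ := (resolvSet S)ᶜ

-- The resolvent `(S - lam)⁻¹` of `S` at `lam` (junk value `0` if `lam ∉ ρ(S)`).
open Classical in
def res (S : E →ₗ.[ℂ] E) (lam : ℂ) : E →L[ℂ] E :=
  if h : ∃ R, IsResolventAt S lam R then h.choose else 0

/-- Condition (H): the strip `|Re lam| ≤ h` consists of resolvent points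
and the resolvent is bounded by `M` there. -/
def CondH (S : E →ₗ.[ℂ] E) (h M : ℝ) : Prop :=
  0 < h ∧ ∀ lam : ℂ, |lam.re| ≤ h → lam ∈ resolvSet S ∧ ‖res S lam‖ ≤ M

/-- The set of `x` such that the local resolvent `lam ↦ (S - lam)⁻¹ x` has a bounded analytic
extension to (a neighbourhood of) `H`; it is a linear subspace of `E`. -/
def Gsub (S : E →ₗ.[ℂ] E) (H : Set ℂ) : Submodule ℂ E where
  carrier := {x | ∃ φ : ℂ → E,
    (∃ U, IsOpen U ∧ H ⊆ U ∧ DifferentiableOn ℂ φ U) ∧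
    (∃ C : ℝ, ∀ z ∈ H, ‖φ z‖ ≤ C) ∧
    (∀ t : ℝ, φ ((t : ℂ) * Complex.I) = res S ((t : ℂ) * Complex.I) x)}
  zero_mem' := ⟨0, ⟨univ, isOpen_univ, subset_univ _, differentiableOn_const 0⟩,
    ⟨0, fun z _ => by simp⟩, fun t => by simp⟩
  add_mem' := by
    rintro a b ⟨φ, ⟨U, hU, hHU, hdU⟩, ⟨C, hC⟩, hφ⟩ ⟨ψ, ⟨V, hV, hHV, hdV⟩, ⟨D, hD⟩, hψ⟩
    refine ⟨φ + ψ, ⟨U ∩ V, hU.inter hV, subset_inter hHU hHV,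
      ((hdU.mono inter_subset_left).add (hdV.mono inter_subset_right))⟩,
      ⟨C + D, fun z hz => (norm_add_le _ _).trans (add_le_add (hC z hz) (hD z hz))⟩,
      fun t => by simp [hφ t, hψ t]⟩
  smul_mem' := by
    rintro c a ⟨φ, ⟨U, hU, hHU, hdU⟩, ⟨C, hC⟩, hφ⟩
    refine ⟨c • φ, ⟨U, hU, hHU, hdU.const_smul c⟩,
      ⟨‖c‖ * C, fun z hz => by
        rw [Pi.smul_apply, norm_smul]
        exact mul_le_mul_of_nonneg_left (hC z hz) (norm_nonneg c)⟩,
      fun t => by simp [hφ t]⟩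

/-- The subspace `G₊` of `x` whose local resolvent extends boundedly and analytically
to the closed left half plane. -/
def Gp (S : E →ₗ.[ℂ] E) : Submodule ℂ E := Gsub S {z : ℂ | z.re ≤ 0}

/-- The subspace `G₋` of `x` whose local resolvent extends boundedly and analytically
to the closed right half plane. -/
def Gm (S : E →ₗ.[ℂ] E) : Submodule ℂ E := Gsub S {z : ℂ | 0 ≤ z.re}

/-- The part of the operator `S` in the subspace `Y`: the restriction of `S` to
`{x ∈ D(S) ∩ Y : S x ∈ Y}`, regarded as an operator in `Y`. If `Y` is `S`-invariant
this is the restriction `S|Y`. -/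
def partIn (S : E →ₗ.[ℂ] E) (Y : Submodule ℂ E) : ↥Y →ₗ.[ℂ] ↥Y :=
  Submodule.toLinearPMap (S.graph.comap (Y.subtype.prodMap Y.subtype))

/-- `x ∈ D(S²)`. -/
def memD2 (S : E →ₗ.[ℂ] E) (x : E) : Prop :=
  ∃ h : x ∈ S.domain, S ⟨x, h⟩ ∈ S.domain

-- `S² x` (junk value `0` if `x ∉ D(S²)`).
open Classical in
def sqApply (S : E →ₗ.[ℂ] E) (x : E) : E :=
  if h : memD2 S x then S ⟨S ⟨x, h.choose⟩, h.choose_spec⟩ else 0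

/-- `S` is dichotomous with respect to the decomposition `E = Xp ⊕ Xm`. -/
structure IsDichotomousWrt (S : E →ₗ.[ℂ] E) (Xp Xm : Submodule ℂ E) : Prop where
  closed_p : IsClosed (Xp : Set E)
  closed_m : IsClosed (Xm : Set E)
  compl : IsCompl Xp Xm
  imag : ∀ t : ℝ, (t : ℂ) * Complex.I ∈ resolvSet S
  inv_p : ∀ x : S.domain, (x : E) ∈ Xp → S x ∈ Xp
  inv_m : ∀ x : S.domain, (x : E) ∈ Xm → S x ∈ Xm
  spec_p : pSpectrum (partIn S Xp) ⊆ {lam : ℂ | 0 < lam.re}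
  spec_m : pSpectrum (partIn S Xm) ⊆ {lam : ℂ | lam.re < 0}

/-- `S` is strictly dichotomous with respect to the decomposition `E = Xp ⊕ Xm`. -/
structure IsStrictlyDichotomousWrt (S : E →ₗ.[ℂ] E) (Xp Xm : Submodule ℂ E)
    extends IsDichotomousWrt S Xp Xm : Prop where
  bnd_p : ∃ M : ℝ, ∀ lam : ℂ, lam.re ≤ 0 →
    lam ∈ resolvSet (partIn S Xp) ∧ ‖res (partIn S Xp) lam‖ ≤ M
  bnd_m : ∃ M : ℝ, ∀ lam : ℂ, 0 ≤ lam.re →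
    lam ∈ resolvSet (partIn S Xm) ∧ ‖res (partIn S Xm) lam‖ ≤ M

/-- `S` is strictly dichotomous (w.r.t. some decomposition). -/
def IsStrictlyDichotomous (S : E →ₗ.[ℂ] E) : Prop :=
  ∃ Xp Xm : Submodule ℂ E, IsStrictlyDichotomousWrt S Xp Xm

/-- `S` is bisectorial with constant `M`. -/
def Bisectorial (S : E →ₗ.[ℂ] E) (M : ℝ) : Prop :=
  0 < M ∧ ∀ lam : ℂ, lam.re = 0 → lam ≠ 0 →
    lam ∈ resolvSet S ∧ ‖res S lam‖ ≤ M / ‖lam‖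

/-- `S` is almost bisectorial with constants `M` and exponent `β`. -/
def AlmostBisectorial (S : E →ₗ.[ℂ] E) (M β : ℝ) : Prop :=
  0 < M ∧ 0 < β ∧ β < 1 ∧ ∀ lam : ℂ, lam.re = 0 → lam ≠ 0 →
    lam ∈ resolvSet S ∧ ‖res S lam‖ ≤ M / ‖lam‖ ^ β

/-- The operator `A₊ = (2πi)⁻¹ ∫_{Re lam = h} lam⁻² (S-lam)⁻¹ dlam`. -/
def Aplus (S : E →ₗ.[ℂ] E) (h : ℝ) : E →L[ℂ] E :=
  (2 * (Real.pi : ℂ))⁻¹ •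
    ∫ t : ℝ, (((h : ℂ) + (t : ℂ) * Complex.I) ^ 2)⁻¹ • res S ((h : ℂ) + (t : ℂ) * Complex.I)

/-- The operator `A₋ = -(2πi)⁻¹ ∫_{Re lam = -h} lam⁻² (S-lam)⁻¹ dlam`. -/
def Aminus (S : E →ₗ.[ℂ] E) (h : ℝ) : E →L[ℂ] E :=
  -(2 * (Real.pi : ℂ))⁻¹ •
    ∫ t : ℝ, ((-(h : ℂ) + (t : ℂ) * Complex.I) ^ 2)⁻¹ • res S (-(h : ℂ) + (t : ℂ) * Complex.I)

/-- The operator `B₊ = (2πi)⁻¹ ∫_{Re lam = h} lam⁻¹ (S-lam)⁻¹ dlam`. -/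
def Bplus (S : E →ₗ.[ℂ] E) (h : ℝ) : E →L[ℂ] E :=
  (2 * (Real.pi : ℂ))⁻¹ •
    ∫ t : ℝ, ((h : ℂ) + (t : ℂ) * Complex.I)⁻¹ • res S ((h : ℂ) + (t : ℂ) * Complex.I)

/-- The operator `B₋ = -(2πi)⁻¹ ∫_{Re lam = -h} lam⁻¹ (S-lam)⁻¹ dlam`. -/
def Bminus (S : E →ₗ.[ℂ] E) (h : ℝ) : E →L[ℂ] E :=
  -(2 * (Real.pi : ℂ))⁻¹ •
    ∫ t : ℝ, (-(h : ℂ) + (t : ℂ) * Complex.I)⁻¹ • res S (-(h : ℂ) + (t : ℂ) * Complex.I)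

/-- `M₊`, the closure of the range of `A₊`. -/
def Msubp (S : E →ₗ.[ℂ] E) (h : ℝ) : Submodule ℂ E :=
  (LinearMap.range ((Aplus S h) : E →ₗ[ℂ] E)).topologicalClosure

/-- `M₋`, the closure of the range of `A₋`. -/
def Msubm (S : E →ₗ.[ℂ] E) (h : ℝ) : Submodule ℂ E :=
  (LinearMap.range ((Aminus S h) : E →ₗ[ℂ] E)).topologicalClosure


variable {X : Type*} [NormedAddCommGroup X] [NormedSpace ℂ X] [CompleteSpace X]

open scoped Topology

lemma res_spec' (S : E →ₗ.[ℂ] E) (lam : ℂ) (h : lam ∈ resolvSet S) :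
    IsResolventAt S lam (res S lam) := by
  have h' : ∃ R, IsResolventAt S lam R := h
  rw [res, dif_pos h']
  exact h'.choose_spec


/-- `G₊ ∩ G₋ = {0}`. -/
theorem statement3 (S : X →ₗ.[ℂ] X)
    (him : ∀ t : ℝ, (t : ℂ) * Complex.I ∈ resolvSet S) :
    (Gp S : Set X) ∩ (Gm S : Set X) = {0} := by
  apply Subset.antisymm
  · rintro x ⟨hxp, hxm⟩
    obtain ⟨φ, ⟨U, hU, hHU, hdU⟩, ⟨C, hC⟩, hφ⟩ := hxp
    obtain ⟨ψ, ⟨V, hV, hHV, hdV⟩, ⟨D, hD⟩, hψ⟩ := hxm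
    set A : Set ℂ := range (fun t : ℝ => (t : ℂ) * Complex.I) with hA
    have hAsub : A ⊆ U ∩ V := by
      rintro z ⟨t, rfl⟩
      exact ⟨hHU (by simp), hHV (by simp)⟩
    have h0A : (0 : ℂ) ∈ A := ⟨0, by simp⟩
    have hAconn : IsPreconnected A := isPreconnected_range (by continuity)
    set W := connectedComponentIn (U ∩ V) 0 with hW
    have hWopen : IsOpen W := (hU.inter hV).connectedComponentIn
    have hWconn : IsPreconnected W := isPreconnected_connectedComponentIn
    have hAW : A ⊆ W := hAconn.subset_connectedComponentIn h0A hAsub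
    have hWU : W ⊆ U := (connectedComponentIn_subset _ _).trans inter_subset_left
    have hWV : W ⊆ V := (connectedComponentIn_subset _ _).trans inter_subset_right
    have h0W : (0 : ℂ) ∈ W := hAW h0A
    have hfreq : ∃ᶠ z in 𝓝[≠] (0 : ℂ), φ z = ψ z := by
      have htend : Tendsto (fun t : ℝ => (t : ℂ) * Complex.I) (𝓝[≠] 0) (𝓝[≠] 0) := by
        rw [tendsto_nhdsWithin_iff]
        constructor
        · apply Tendsto.mono_left _ nhdsWithin_le_nhds
          have hcont : Continuous (fun t : ℝ => (t : ℂ) * Complex.I) := by continuity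
          simpa using hcont.tendsto 0
        · filter_upwards [self_mem_nhdsWithin] with t ht
          simp only [mem_compl_iff, mem_singleton_iff] at ht ⊢
          simp [Complex.ext_iff, ht]
      apply htend.frequently
      apply Frequently.of_forall
      intro t
      rw [hφ t, hψ t]
    have him0 : (0 : ℂ) ∈ resolvSet S := by simpa using him 0
    have hφ0 : φ 0 = res S 0 x := by simpa using hφ 0
    have hres_const : ∀ t : ℝ,
        res S ((t : ℂ) * Complex.I) x = res S 0 x := by
      intro t
      rw [← sub_eq_zero]
      apply NormedSpace.eq_zero_of_forall_dual_eq_zero ℂ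
      intro ℓ
      have hEq : EqOn (fun z => ℓ (φ z)) (fun z => ℓ (ψ z)) W := by
        apply AnalyticOnNhd.eqOn_of_preconnected_of_frequently_eq _ _ hWconn h0W
        · exact hfreq.mono fun z hz => by simp [hz]
        · exact ((ℓ.differentiable.comp_differentiableOn (hdU.mono hWU)).analyticOnNhd hWopen)
        · exact ((ℓ.differentiable.comp_differentiableOn (hdV.mono hWV)).analyticOnNhd hWopen)
      set F : ℂ → ℂ := fun z => if z.re ≤ 0 then ℓ (φ z) else ℓ (ψ z) with hF
      have hFdiff : Differentiable ℂ F := by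
        intro z
        rcases lt_trichotomy z.re 0 with hz | hz | hz
        · have hmem : {w : ℂ | w.re < 0} ∈ 𝓝 z :=
            (isOpen_lt Complex.continuous_re continuous_const).mem_nhds hz
          have hd : DifferentiableAt ℂ (fun w => ℓ (φ w)) z :=
            ℓ.differentiableAt.comp z (hdU.differentiableAt (hU.mem_nhds (hHU hz.le)))
          exact hd.congr_of_eventuallyEq
            (eventually_of_mem hmem fun w hw => if_pos (le_of_lt hw))
        · have hzW : z ∈ W := hAW ⟨z.im, by apply Complex.ext <;> simp [hz]⟩
          have hd : DifferentiableAt ℂ (fun w => ℓ (φ w)) z :=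
            ℓ.differentiableAt.comp z (hdU.differentiableAt (hU.mem_nhds (hWU hzW)))
          apply hd.congr_of_eventuallyEq
          apply eventually_of_mem (hWopen.mem_nhds hzW)
          intro w hw
          by_cases h : w.re ≤ 0
          · simp [F, h]
          · simp only [F, if_neg h]
            exact (hEq hw).symm
        · have hmem : {w : ℂ | 0 < w.re} ∈ 𝓝 z :=
            (isOpen_lt continuous_const Complex.continuous_re).mem_nhds hz
          have hd : DifferentiableAt ℂ (fun w => ℓ (ψ w)) z :=
            ℓ.differentiableAt.comp z (hdV.differentiableAt (hV.mem_nhds (hHV hz.le)))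
          exact hd.congr_of_eventuallyEq
            (eventually_of_mem hmem fun w hw => if_neg (not_le.mpr hw))
      have hFb : Bornology.IsBounded (range F) := by
        rw [isBounded_iff_forall_norm_le]
        refine ⟨‖ℓ‖ * max C D, ?_⟩
        rintro _ ⟨z, rfl⟩
        by_cases h : z.re ≤ 0
        · simp only [F, if_pos h]
          exact (ℓ.le_opNorm _).trans
            (mul_le_mul_of_nonneg_left ((hC z h).trans (le_max_left _ _)) (norm_nonneg _))
        · simp only [F, if_neg h]
          exact (ℓ.le_opNorm _).trans
            (mul_le_mul_of_nonneg_left ((hD z (le_of_not_ge h)).trans (le_max_right _ _))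
              (norm_nonneg _))
      have hkey := hFdiff.apply_eq_apply_of_bounded hFb ((t : ℂ) * Complex.I) 0
      simp only [F] at hkey
      rw [if_pos (by simp), if_pos (by simp)] at hkey
      rw [map_sub, ← hφ t, ← hφ0, hkey, sub_self]
    -- final algebra
    have hc : res S 0 x ∈ S.domain := (res_spec' S _ him0).1 x
    have key : ∀ t : ℝ,
        S ⟨res S 0 x, hc⟩ - ((t : ℂ) * Complex.I) • res S 0 x = x := by
      intro t
      have hspec := res_spec' S _ (him t)
      have hx1 : res S ((t : ℂ) * Complex.I) x ∈ S.domain := hspec.1 x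
      have h3 := hspec.2.2 x hx1
      rw [show (⟨res S ((t : ℂ) * Complex.I) x, hx1⟩ : S.domain)
          = ⟨res S 0 x, hc⟩ from Subtype.ext (hres_const t),
        hres_const t] at h3
      exact h3
    have e0 := key 0
    have e1 := key 1
    simp only [Complex.ofReal_zero, zero_mul, zero_smul, sub_zero] at e0
    rw [e0] at e1
    have hc0 : res S 0 x = 0 := by
      have h := sub_eq_self.mp e1
      simpa [smul_eq_zero, Complex.I_ne_zero] using h
    rw [show (⟨res S 0 x, hc⟩ : S.domain) = 0 from Subtype.ext hc0] at e0
    rw [LinearPMap.map_zero] at e0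
    simp [← e0]
  · rintro x hx
    rw [mem_singleton_iff] at hx
    subst hx
    exact ⟨(Gp S).zero_mem, (Gm S).zero_mem⟩

end
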